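/- The classical subset of the operational model with history tracking is reversible: the one-step transition relation on configurations (with terms identified up to renaming of bound variables, e.g. using De Bruijn indices) given by the rules app1, app2, β₁, β₂ and Id is injective, i.e., if configurations H₁;t₁ and H₂;t₂ each step to the same configuration s, then H₁;t₁ = H₂;t₂; at each step enough information is kept to reconstruct the previous step. -/
import Mathlib


namespace ClassicalLambda

/-- Terms of the classical lambda calculus in de Bruijn representation
(so that terms are automatically identified up to renaming of bound
variables), with constants (constant 0 is the placeholder ⊥). -/
inductive DTerm where
  | var (n : ℕ)
  | lam (b : DTerm)
  | app (a b : DTerm)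
  | const (c : ℕ)
  deriving DecidableEq

open DTerm

/-- The placeholder symbol ⊥. -/
def ph : DTerm := const 0

/-- Shift the free variables ≥ k up by d. -/
def lift (d : ℕ) : ℕ → DTerm → DTerm
  | k, var n => if n < k then var n else var (n + d)
  | k, lam b => lam (lift d (k + 1) b)
  | k, app a b => app (lift d k a) (lift d k b)
  | _, const c => const c

/-- Capture-avoiding substitution of v for the free variable k. -/
def substVar : DTerm → ℕ → DTerm → DTerm
  | var n, k, v => if n = k then lift k 0 v else if k < n then var (n - 1) else var n
  | lam b, k, v => lam (substVar b (k + 1) v)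
  | app a b, k, v => app (substVar a k v) (substVar b k v)
  | const c, _, _ => const c

/-- β-reduction substitution: instantiate the outermost binder with v. -/
def instantiate (b v : DTerm) : DTerm := substVar b 0 v

/-- Whether the free variable k occurs in a term. -/
def occurs : ℕ → DTerm → Bool
  | k, var n => n = k
  | k, lam b => occurs (k + 1) b
  | k, app a b => occurs k a || occurs k b
  | _, const _ => false

/-- The skeleton Ē_x (for x the free variable k): replace every maximal
subterm in which k does not occur free by the placeholder ⊥, keeping k. -/
def skel : ℕ → DTerm → DTerm
  | k, var n => if n = k then var n else ph
  | k, lam b => if occurs (k + 1) b then lam (skel (k + 1) b) else ph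
  | k, app a b => if occurs k a || occurs k b then app (skel k a) (skel k b) else ph
  | _, const _ => ph


/-- Values: variables, constants, and abstractions. -/
def IsValue : DTerm → Prop
  | var _ => True
  | const _ => True
  | lam _ => True
  | app _ _ => False

/-- One step of the classical subset of the operational model with history
tracking: `TStep t h t'` means t ⟶ h;t', recording the history entry h. -/
inductive TStep : DTerm → DTerm → DTerm → Prop
  | app1 {t₁ h t₁'} (t₂) : TStep t₁ h t₁' →
      TStep (app t₁ t₂) (app h ph) (app t₁' t₂)
  | app2 {v t₂ h t₂'} : IsValue v → TStep t₂ h t₂' →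
      TStep (app v t₂) (app ph h) (app v t₂')
  | beta1 {E v} : IsValue v → occurs 0 E = true →
      TStep (app (lam E) v) (app (lam (skel 0 E)) ph) (instantiate E v)
  | beta2 {E v} : IsValue v → occurs 0 E = false →
      TStep (app (lam E) v) (app (lam ph) v) (instantiate E v)

/-- One step on configurations (history track, computational register):
either a reduction step appending its history entry, or (Id) appending ⊥
when no other rule applies. -/
inductive ConfigStep : List DTerm × DTerm → List DTerm × DTerm → Prop
  | red {H t h t'} : TStep t h t' → ConfigStep (H, t) (H ++ [h], t')
  | idStep {H t} : (∀ h t', ¬ TStep t h t') → ConfigStep (H, t) (H ++ [ph], t)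

lemma lift_inj : ∀ (t₁ t₂ : DTerm) (d k : ℕ), lift d k t₁ = lift d k t₂ → t₁ = t₂ := by
  intro t₁
  induction t₁ with
  | var n => intro t₂ d k h; cases t₂ <;> simp [lift] at h <;> split_ifs at h <;>
      simp_all [lift] <;> omega
  | lam b ih => intro t₂ d k h; cases t₂ <;> simp [lift] at h <;>
      first
      | (split_ifs at h <;> simp_all)
      | exact congrArg DTerm.lam (ih _ _ _ h)
  | app a b iha ihb =>
      intro t₂ d k h; cases t₂ <;> simp [lift] at h <;>
      first
      | (split_ifs at h <;> simp_all)
      | exact congrArg₂ DTerm.app (iha _ _ _ h.1) (ihb _ _ _ h.2)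
  | const c => intro t₂ d k h; cases t₂ <;> simp [lift] at h <;>
      first
      | (split_ifs at h <;> simp_all)
      | simp_all

lemma skel_eq_ph : ∀ (t : DTerm) (k : ℕ), skel k t = ph ↔ occurs k t = false := by
  intro t
  induction t with
  | var n => intro k; simp only [skel, occurs, ph]; split_ifs with h <;> simp_all [ph]
  | lam b ih => intro k; simp only [skel, occurs, ph]; split_ifs with h <;> simp_all [ph]
  | app a b iha ihb => intro k; simp only [skel, occurs, ph]; split_ifs with h <;> simp_all [ph] <;> (intros; simp_all)
  | const c => intro k; simp [skel, occurs, ph]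

lemma subst_inj_nonocc : ∀ (a₁ a₂ : DTerm) (k : ℕ) (v₁ v₂ : DTerm),
    occurs k a₁ = false → occurs k a₂ = false →
    substVar a₁ k v₁ = substVar a₂ k v₂ → a₁ = a₂ := by
  intro a₁
  induction a₁ with
  | var n =>
      intro a₂ k v₁ v₂ h1 h2 h
      cases a₂ <;> simp_all [occurs, substVar] <;> split_ifs at h <;> simp_all <;> omega
  | lam b ih =>
      intro a₂ k v₁ v₂ h1 h2 h
      cases a₂ <;> simp_all [occurs, substVar]
      · split_ifs at h <;> simp_all
      · exact ih _ _ _ _ h1 h2 h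
  | app a b iha ihb =>
      intro a₂ k v₁ v₂ h1 h2 h
      cases a₂ <;> simp_all [occurs, substVar]
      · split_ifs at h <;> simp_all
      · exact ⟨iha _ _ _ _ h1.1 h2.1 h.1, ihb _ _ _ _ h1.2 h2.2 h.2⟩
  | const c =>
      intro a₂ k v₁ v₂ h1 h2 h
      cases a₂ <;> simp_all [occurs, substVar]
      split_ifs at h <;> simp_all

lemma skel_subst_inj : ∀ (E₁ E₂ : DTerm) (k : ℕ) (v₁ v₂ : DTerm),
    occurs k E₁ = true → skel k E₁ = skel k E₂ →
    substVar E₁ k v₁ = substVar E₂ k v₂ → E₁ = E₂ ∧ v₁ = v₂ := by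
  intro E₁
  induction E₁ with
  | var n =>
      intro E₂ k v₁ v₂ ho hs h
      have hn : n = k := by simpa [occurs] using ho
      subst hn
      cases E₂ with
      | var m =>
          by_cases hm : m = n
          · subst hm
            simp [substVar] at h
            exact ⟨rfl, lift_inj _ _ _ _ h⟩
          · simp [skel, hm, ph] at hs
      | lam b => simp only [skel] at hs; split_ifs at hs <;> simp_all [ph]
      | app a b => simp only [skel] at hs; split_ifs at hs <;> simp_all [ph]
      | const c => simp [skel, ph] at hs
  | lam b ih =>
      intro E₂ k v₁ v₂ ho hs h
      have hob : occurs (k+1) b = true := by simpa [occurs] using ho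
      cases E₂ with
      | var m => simp only [skel, hob] at hs; split_ifs at hs <;> simp_all [ph]
      | lam b₂ =>
          simp only [skel, hob, if_true] at hs
          split_ifs at hs with h2
          · simp at hs
            simp [substVar] at h
            obtain ⟨e1, e2⟩ := ih _ _ _ _ hob hs h
            exact ⟨by rw [e1], e2⟩
          · simp [ph] at hs
      | app a₂ b₂ => simp only [skel, hob] at hs; split_ifs at hs <;> simp_all [ph]
      | const c => simp [skel, hob, ph] at hs
  | app a b iha ihb =>
      intro E₂ k v₁ v₂ ho hs h
      have hoab : (occurs k a || occurs k b) = true := by simpa [occurs] using ho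
      cases E₂ with
      | var m => simp only [skel, hoab] at hs; split_ifs at hs <;> simp_all [ph]
      | lam b₂ => simp only [skel, hoab] at hs; split_ifs at hs <;> simp_all [ph]
      | const c => simp [skel, hoab, ph] at hs
      | app a₂ b₂ =>
          simp only [skel, hoab, if_true] at hs
          split_ifs at hs with h2
          · simp at hs
            obtain ⟨hsa, hsb⟩ := hs
            simp [substVar] at h
            obtain ⟨ha, hb⟩ := h
            rcases Bool.eq_false_or_eq_true (occurs k a) with hka | hka
            swap
            · -- occurs k a = false; then occurs k b = true
              have hkb : occurs k b = true := by
                rcases Bool.or_eq_true_iff.mp hoab with h' | h'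
                · rw [hka] at h'; exact absurd h' (by simp)
                · exact h'
              have hka2 : occurs k a₂ = false := by
                have := (skel_eq_ph a k).mpr hka
                rw [this] at hsa
                exact (skel_eq_ph a₂ k).mp hsa.symm
              obtain ⟨eb, ev⟩ := ihb _ _ _ _ hkb hsb hb
              have ea := subst_inj_nonocc a a₂ k v₁ v₂ hka hka2 ha
              exact ⟨by rw [ea, eb], ev⟩
            · obtain ⟨ea, ev⟩ := iha _ _ _ _ hka hsa ha
              rcases Bool.eq_false_or_eq_true (occurs k b) with hkb | hkb
              swap
              · have hkb2 : occurs k b₂ = false := by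
                  have := (skel_eq_ph b k).mpr hkb
                  rw [this] at hsb
                  exact (skel_eq_ph b₂ k).mp hsb.symm
                have eb := subst_inj_nonocc b b₂ k v₁ v₂ hkb hkb2 hb
                exact ⟨by rw [ea, eb], ev⟩
              · obtain ⟨eb, _⟩ := ihb _ _ _ _ hkb hsb hb
                exact ⟨by rw [ea, eb], ev⟩
          · simp [ph] at hs
  | const c =>
      intro E₂ k v₁ v₂ ho hs h
      simp [occurs] at ho

lemma hist_is_app : ∀ {t h t'}, TStep t h t' → ∃ a b, h = app a b := by
  intro t h t' hs
  cases hs with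
  | app1 t₂ h1 => exact ⟨_, _, rfl⟩
  | app2 hv h2 => exact ⟨_, _, rfl⟩
  | beta1 hv ho => exact ⟨_, _, rfl⟩
  | beta2 hv ho => exact ⟨_, _, rfl⟩

lemma tstep_inj : ∀ {t₁ h t₁'}, TStep t₁ h t₁' →
    ∀ {t₂ h₂ t₂'}, TStep t₂ h₂ t₂' → h = h₂ → t₁' = t₂' → t₁ = t₂ := by
  intro t₁ h t₁' hs
  induction hs with
  | app1 s₂ h1 ih =>
      intro t₂ h₂ t₂' hstep eqh eqt
      cases hstep with
      | app1 u₂ hu =>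
          injection eqh with e1 _
          injection eqt with e2 e3
          subst e1 e3
          rw [ih hu rfl e2]
      | app2 hv hu =>
          obtain ⟨x, y, hxy⟩ := hist_is_app h1
          injection eqh with e1 _
          simp [hxy, ph] at e1
      | beta1 hv ho =>
          obtain ⟨x, y, hxy⟩ := hist_is_app h1
          injection eqh with e1 _
          simp [hxy, ph] at e1
      | beta2 hv ho =>
          obtain ⟨x, y, hxy⟩ := hist_is_app h1
          injection eqh with e1 _
          simp [hxy, ph] at e1
  | app2 hv h1 ih =>
      intro t₂ h₂ t₂' hstep eqh eqt
      cases hstep with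
      | app1 u₂ hu =>
          obtain ⟨x, y, hxy⟩ := hist_is_app hu
          injection eqh with e1 _
          simp [hxy, ph] at e1
      | app2 hv' hu =>
          injection eqh with _ e1
          injection eqt with e2 e3
          subst e2
          rw [ih hu e1 e3]
      | beta1 hv' ho =>
          injection eqh with e1 _
          simp [ph] at e1
      | beta2 hv' ho =>
          injection eqh with e1 _
          simp [ph] at e1
  | beta1 hv ho =>
      intro t₂ h₂ t₂' hstep eqh eqt
      cases hstep with
      | app1 u₂ hu =>
          obtain ⟨x, y, hxy⟩ := hist_is_app hu
          injection eqh with e1 _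
          simp [hxy, ph] at e1
      | app2 hv' hu =>
          injection eqh with e1 _
          simp [ph] at e1
      | beta1 hv' ho' =>
          rename_i E v E₂ v₂
          injection eqh with e1 _
          injection e1 with e1
          obtain ⟨eE, ev⟩ := skel_subst_inj E E₂ 0 v v₂ ho e1 eqt
          rw [eE, ev]
      | beta2 hv' ho' =>
          rename_i E v E₂ v₂
          injection eqh with e1 _
          injection e1 with e1
          rw [(skel_eq_ph E 0).mp e1] at ho
          simp at ho
  | beta2 hv ho =>
      intro t₂ h₂ t₂' hstep eqh eqt
      cases hstep with
      | app1 u₂ hu =>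
          obtain ⟨x, y, hxy⟩ := hist_is_app hu
          injection eqh with e1 _
          simp [hxy, ph] at e1
      | app2 hv' hu =>
          injection eqh with e1 _
          simp [ph] at e1
      | beta1 hv' ho' =>
          rename_i E v E₂ v₂
          injection eqh with e1 _
          injection e1 with e1
          have : occurs 0 E₂ = false := (skel_eq_ph E₂ 0).mp e1.symm
          simp [this] at ho'
      | beta2 hv' ho' =>
          rename_i E v E₂ v₂
          injection eqh with _ e2
          subst e2
          have eE := subst_inj_nonocc E E₂ 0 _ _ ho ho' eqt
          rw [eE]

lemma config_inv {c s : List DTerm × DTerm} (h : ConfigStep c s) :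
    (∃ e t', TStep c.2 e t' ∧ s = (c.1 ++ [e], t')) ∨
    ((∀ e t', ¬ TStep c.2 e t') ∧ s = (c.1 ++ [ph], c.2)) := by
  cases h with
  | red hs => exact Or.inl ⟨_, _, hs, rfl⟩
  | idStep hno => exact Or.inr ⟨hno, rfl⟩


/-- The classical subset of the operational model with
history tracking is reversible: the one-step transition relation on
configurations is injective — at each step enough information is kept to
reconstruct the previous step. -/
theorem classical_step_injective (c₁ c₂ s : List DTerm × DTerm)
    (h₁ : ConfigStep c₁ s) (h₂ : ConfigStep c₂ s) : c₁ = c₂ := by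
  rcases config_inv h₁ with ⟨e₁, t₁', hs₁, h1e⟩ | ⟨hno₁, h1e⟩ <;>
  rcases config_inv h₂ with ⟨e₂, t₂', hs₂, h2e⟩ | ⟨hno₂, h2e⟩ <;>
  [skip; skip; skip; skip] <;>
  (have heq := h1e.symm.trans h2e
   have hH := congrArg Prod.fst heq
   have ht := congrArg Prod.snd heq
   simp only at hH ht
   obtain ⟨hH2, he⟩ := List.append_inj hH (by
     have := congrArg List.length hH
     simp at this
     omega)
   have he' := List.singleton_injective he)
  · exact Prod.ext hH2 (tstep_inj hs₁ hs₂ he' ht)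
  · obtain ⟨x, y, hxy⟩ := hist_is_app hs₁
    rw [he'] at hxy
    simp [ph] at hxy
  · obtain ⟨x, y, hxy⟩ := hist_is_app hs₂
    rw [← he'] at hxy
    simp [ph] at hxy
  · exact Prod.ext hH2 ht

end ClassicalLambda
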